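/- arXiv:1711.03701 — 2 statements merged into one kernel-verified Lean document; each statement's English description precedes it below -/
import Mathlib

section
/- (Unbiasedness of the kernel-smoothed estimator) Under the additive matrix model, if all diagonal entries of A are equal (so A_{ii} = tr(A)/m for all i), then for every t₀ ∈ [0,1] the kernel-smoothed estimator satisfies E[Ŝ_m(t₀)] = Σ_{i=1}^m w_i(t₀) B(i/m) = B̃(t₀). -/
open MeasureTheory ProbabilityTheory Matrix Real Filter Asymptotics
open scoped Kronecker

noncomputable section

/-- The spectral (`ℓ²`-operator) norm of a real square matrix. -/
def l2OpNorm {k : Type*} [Fintype k] [DecidableEq k] (M : Matrix k k ℝ) : ℝ :=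
  ‖Matrix.toEuclideanCLM (𝕜 := ℝ) M‖

/-- The Euclidean (`ℓ²`) norm of a finitely indexed real vector. -/
def euclNorm {ι : Type*} [Fintype ι] (w : ι → ℝ) : ℝ :=
  Real.sqrt (∑ i, w i ^ 2)

/-- The Frobenius norm of a real matrix. -/
def frobNorm {a b : Type*} [Fintype a] [Fintype b] (M : Matrix a b ℝ) : ℝ :=
  Real.sqrt (∑ i, ∑ j, M i j ^ 2)

/-- The elementwise maximum norm of a real square matrix. -/
def maxNorm {a : Type*} [Fintype a] (M : Matrix a a ℝ) : ℝ :=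
  ⨆ p : a × a, |M p.1 p.2|

/-- Unbiasedness of the kernel-smoothed estimator. -/
theorem kernel_estimator_unbiased
    (Ω : Type) [MeasurableSpace Ω] (μ : Measure Ω) [IsProbabilityMeasure μ]
    (m n : ℕ) (hm : 1 ≤ m) (hn : 1 ≤ n)
    (A : Matrix (Fin m) (Fin m) ℝ) (hA : A.PosDef)
    (B : ℝ → Matrix (Fin n) (Fin n) ℝ)
    (hB : ∀ t, t ∈ Set.Icc (0:ℝ) 1 → (B t).PosDef)
    (Asqrt : Matrix (Fin m) (Fin m) ℝ)
    (hAsqrt : Asqrt.PosSemidef ∧ Asqrt * Asqrt = A)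
    (Bsqrt : ℝ → Matrix (Fin n) (Fin n) ℝ)
    (hBsqrt : ∀ t, t ∈ Set.Icc (0:ℝ) 1 → (Bsqrt t).PosSemidef ∧ Bsqrt t * Bsqrt t = B t)
    (Z1 Z2 : Ω → Matrix (Fin n) (Fin m) ℝ)
    (hmeas1 : ∀ j i, Measurable fun ω => Z1 ω j i)
    (hmeas2 : ∀ j i, Measurable fun ω => Z2 ω j i)
    (hmean1 : ∀ j i, ∫ ω, Z1 ω j i ∂μ = 0)
    (hmean2 : ∀ j i, ∫ ω, Z2 ω j i ∂μ = 0)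
    (hvar1 : ∀ j i, ∫ ω, (Z1 ω j i) ^ 2 ∂μ = 1)
    (hvar2 : ∀ j i, ∫ ω, (Z2 ω j i) ^ 2 ∂μ = 1)
    (hindep : iIndepFun
      (fun p : (Fin n × Fin m) ⊕ (Fin n × Fin m) => fun ω =>
        Sum.elim (fun q => Z1 ω q.1 q.2) (fun q => Z2 ω q.1 q.2) p) μ)
    (X : Ω → Matrix (Fin n) (Fin m) ℝ)
    (hX : ∀ ω, X ω = Z1 ω * Asqrt +
      Matrix.of fun (j : Fin n) (i : Fin m) =>
        (Bsqrt (((i : ℕ) + 1 : ℝ) / m)).mulVec (fun k => Z2 ω k i) j)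
    (hdiag : ∀ i, A i i = A.trace / m)
    (Kker : ℝ → ℝ) (hKpos : ∀ u, 0 ≤ Kker u)
    (h t₀ : ℝ) (hh : 0 < h) (ht₀ : t₀ ∈ Set.Icc (0:ℝ) 1) :
    ∀ j k : Fin n,
      (∫ ω, (∑ i : Fin m, (1 / (m * h) * Kker ((((i : ℕ) + 1 : ℝ) / m - t₀) / h)) *
          (X ω j i * X ω k i - A.trace / m * (if j = k then (1 : ℝ) else 0))) ∂μ)
        = ∑ i : Fin m, (1 / (m * h) * Kker ((((i : ℕ) + 1 : ℝ) / m - t₀) / h)) * B (((i : ℕ) + 1 : ℝ) / m) j k := by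
  intro j k
  classical
  have hm0 : (0:ℝ) < m := by exact_mod_cast Nat.pos_of_ne_zero (by omega)
  have hT : ∀ i : Fin m, (((i:ℕ) + 1 : ℝ) / m) ∈ Set.Icc (0:ℝ) 1 := by
    intro i
    constructor
    · positivity
    · rw [div_le_one hm0]
      exact_mod_cast i.2
  set W : (Fin n × Fin m) ⊕ (Fin n × Fin m) → Ω → ℝ := fun p ω =>
    Sum.elim (fun q => Z1 ω q.1 q.2) (fun q => Z2 ω q.1 q.2) p with hWdef
  have hWmeas : ∀ p, Measurable (W p) := by
    rintro (⟨a, b⟩ | ⟨a, b⟩)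
    · exact hmeas1 a b
    · exact hmeas2 a b
  have hWmean : ∀ p, ∫ ω, W p ω ∂μ = 0 := by
    rintro (⟨a, b⟩ | ⟨a, b⟩)
    · exact hmean1 a b
    · exact hmean2 a b
  have hWvar : ∀ p, ∫ ω, (W p ω) ^ 2 ∂μ = 1 := by
    rintro (⟨a, b⟩ | ⟨a, b⟩)
    · exact hvar1 a b
    · exact hvar2 a b
  have hWsqInt : ∀ p, Integrable (fun ω => (W p ω) ^ 2) μ := by
    intro p
    by_contra hc
    have h1 := hWvar p
    rw [integral_undef hc] at h1
    exact one_ne_zero h1.symm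
  have hWL2 : ∀ p, MemLp (W p) 2 μ := fun p =>
    (memLp_two_iff_integrable_sq (hWmeas p).aestronglyMeasurable).2 (hWsqInt p)
  have hWmulInt : ∀ p q, Integrable (fun ω => W p ω * W q ω) μ := by
    intro p q
    have h2 : MemLp ((W p) • (W q)) 1 μ :=
      (hWL2 q).smul (hWL2 p)
    have h3 := memLp_one_iff_integrable.1 h2
    exact h3
  have hkey : ∀ p q, ∫ ω, W p ω * W q ω ∂μ = if p = q then 1 else 0 := by
    intro p q
    by_cases hpq : p = q
    · subst hpq
      rw [if_pos rfl]
      simpa [pow_two] using hWvar p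
    · rw [if_neg hpq]
      have hind : IndepFun (W p) (W q) μ := hindep.indepFun hpq
      have hmul := hind.integral_mul_eq_mul_integral (hWmeas p).aestronglyMeasurable
        (hWmeas q).aestronglyMeasurable
      rw [Pi.mul_def] at hmul
      rw [hmul,
        hWmean p, hWmean q, mul_zero]
  set c : Fin n → Fin m → ((Fin n × Fin m) ⊕ (Fin n × Fin m)) → ℝ := fun l i p =>
    Sum.elim (fun q => if q.1 = l then Asqrt q.2 i else 0)
      (fun q => if q.2 = i then Bsqrt (((i:ℕ) + 1 : ℝ) / m) l q.1 else 0) p with hcdef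
  have hXrep : ∀ (ω : Ω) (l : Fin n) (i : Fin m), X ω l i = ∑ p, c l i p * W p ω := by
    intro ω l i
    rw [hX ω]
    simp only [Matrix.add_apply, Matrix.mul_apply, Matrix.of_apply, Matrix.mulVec, dotProduct]
    rw [Fintype.sum_sum_type]
    congr 1
    · rw [Fintype.sum_prod_type, Finset.sum_comm]
      refine Finset.sum_congr rfl fun a _ => ?_
      simp only [hcdef, hWdef, Sum.elim_inl, ite_mul, zero_mul, Finset.sum_ite_eq',
        Finset.mem_univ, if_true]
      ring
    · rw [Fintype.sum_prod_type]
      refine Finset.sum_congr rfl fun a _ => ?_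
      simp only [hcdef, hWdef, Sum.elim_inr, ite_mul, zero_mul, Finset.sum_ite_eq',
        Finset.mem_univ, if_true]
  have hprodrw : ∀ (l l' : Fin n) (i : Fin m), (fun ω => X ω l i * X ω l' i)
      = fun ω => ∑ p, ∑ q, (c l i p * c l' i q) * (W p ω * W q ω) := by
    intro l l' i
    funext ω
    rw [hXrep ω l i, hXrep ω l' i, Finset.sum_mul_sum]
    exact Finset.sum_congr rfl fun p _ => Finset.sum_congr rfl fun q _ => by ring
  have hXXint : ∀ (l l' : Fin n) (i : Fin m),
      Integrable (fun ω => X ω l i * X ω l' i) μ := by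
    intro l l' i
    rw [hprodrw l l' i]
    exact integrable_finset_sum _ fun p _ =>
      integrable_finset_sum _ fun q _ => (hWmulInt p q).const_mul _
  have hEXX : ∀ i : Fin m, ∫ ω, X ω j i * X ω k i ∂μ = ∑ p, c j i p * c k i p := by
    intro i
    rw [hprodrw j k i, integral_finset_sum _ (fun p _ =>
      integrable_finset_sum _ fun q _ => (hWmulInt p q).const_mul _)]
    refine Finset.sum_congr rfl fun p _ => ?_
    rw [integral_finset_sum _ (fun q _ => (hWmulInt p q).const_mul _)]
    have : ∀ q, ∫ ω, (c j i p * c k i q) * (W p ω * W q ω) ∂μ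
        = (c j i p * c k i q) * (if p = q then 1 else 0) := by
      intro q
      rw [integral_const_mul, hkey p q]
    simp only [this, mul_ite, mul_one, mul_zero, Finset.sum_ite_eq, Finset.mem_univ, if_true]
  have hAsym : ∀ a b, Asqrt a b = Asqrt b a := fun a b => by
    simpa using hAsqrt.1.isHermitian.apply b a
  have hBsym : ∀ (i : Fin m) (a b : Fin n),
      Bsqrt (((i:ℕ) + 1 : ℝ) / m) a b = Bsqrt (((i:ℕ) + 1 : ℝ) / m) b a := fun i a b => by
    simpa using ((hBsqrt _ (hT i)).1.isHermitian.apply b a)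
  have hcsum : ∀ i : Fin m, (∑ p, c j i p * c k i p)
      = A.trace / m * (if j = k then (1:ℝ) else 0) + B (((i:ℕ) + 1 : ℝ) / m) j k := by
    intro i
    rw [Fintype.sum_sum_type]
    congr 1
    · by_cases hjk : j = k
      · subst hjk
        rw [if_pos rfl, mul_one, ← hdiag i, ← hAsqrt.2, Matrix.mul_apply]
        rw [Fintype.sum_prod_type, Finset.sum_comm]
        refine Finset.sum_congr rfl fun a _ => ?_
        simp only [hcdef, Sum.elim_inl, ite_mul, zero_mul, mul_ite, mul_zero,
          Finset.sum_ite_eq', Finset.mem_univ, if_true]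
        rw [hAsym i a]
      · rw [if_neg hjk, mul_zero]
        refine Finset.sum_eq_zero fun q _ => ?_
        simp only [hcdef, Sum.elim_inl]
        split_ifs with h1 h2
        · exact absurd (h1.symm.trans h2) hjk
        all_goals simp
    · rw [← (hBsqrt _ (hT i)).2, Matrix.mul_apply, Fintype.sum_prod_type]
      refine Finset.sum_congr rfl fun a _ => ?_
      simp only [hcdef, Sum.elim_inr, ite_mul, zero_mul, mul_ite, mul_zero,
        Finset.sum_ite_eq', Finset.mem_univ, if_true]
      rw [hBsym i k a]
  have hint_i : ∀ i : Fin m, Integrable (fun ω =>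
      (1 / (m * h) * Kker ((((i:ℕ) + 1 : ℝ) / m - t₀) / h)) *
      (X ω j i * X ω k i - A.trace / m * (if j = k then (1:ℝ) else 0))) μ :=
    fun i => ((hXXint j k i).sub (integrable_const _)).const_mul _
  rw [integral_finset_sum _ fun i _ => hint_i i]
  refine Finset.sum_congr rfl fun i _ => ?_
  rw [integral_const_mul]
  congr 1
  rw [integral_sub (hXXint j k i) (integrable_const _), integral_const, probReal_univ,
    one_smul, hEXX i, hcsum i]
  ring
end
end

section
/- (Unbiasedness of the trace estimator) Under the additive matrix model, suppose tr(B(t)) = tr(B) is constant in t, and define tr̂(B) = Σ_{i=1}^m (1/m)‖x_i‖₂² − (n/m) tr(A), where x_i is the i-th column of X. Then E[tr̂(B)] = tr(B). -/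
open MeasureTheory ProbabilityTheory Matrix Real Filter Asymptotics
open scoped Kronecker

noncomputable section

lemma helper_sq_sum {Ω : Type} [MeasurableSpace Ω] (μ : Measure Ω) [IsProbabilityMeasure μ]
    {κ : Type*} [Fintype κ] [DecidableEq κ] (a : κ → ℝ) (h : κ → Ω → ℝ)
    (hL2 : ∀ e, MemLp (h e) 2 μ)
    (hmean : ∀ e, ∫ ω, h e ω ∂μ = 0)
    (hvar : ∀ e, ∫ ω, (h e ω) ^ 2 ∂μ = 1)
    (hind : ∀ e e', e ≠ e' → IndepFun (h e) (h e') μ) :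
    ∫ ω, (∑ e, a e * h e ω) ^ 2 ∂μ = ∑ e, (a e) ^ 2 := by
  have hint : ∀ e e', Integrable (fun ω => h e ω * h e' ω) μ := by
    intro e e'
    have := ((hL2 e').smul (hL2 e) (p := 2) (q := 2) (r := 1))
    exact this.integrable le_rfl
  have key : ∀ ω, (∑ e, a e * h e ω) ^ 2
      = ∑ e, ∑ e', (a e * a e') * (h e ω * h e' ω) := by
    intro ω
    rw [sq, Finset.sum_mul_sum]
    exact Finset.sum_congr rfl fun e _ => Finset.sum_congr rfl fun e' _ => by ring
  simp_rw [key]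
  rw [integral_finset_sum _ (fun e _ => integrable_finset_sum _
    (fun e' _ => ((hint e e').const_mul _)))]
  have : ∀ e : κ, ∫ ω, ∑ e', (a e * a e') * (h e ω * h e' ω) ∂μ = (a e) ^ 2 := by
    intro e
    rw [integral_finset_sum _ (fun e' _ => ((hint e e').const_mul _))]
    have term : ∀ e' : κ, ∫ ω, (a e * a e') * (h e ω * h e' ω) ∂μ
        = if e' = e then (a e) ^ 2 else 0 := by
      intro e'
      rw [integral_const_mul]
      by_cases he : e' = e
      · subst he
        simp only [if_true]
        have : ∫ ω, h e' ω * h e' ω ∂μ = 1 := by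
          simpa [sq] using hvar e'
        rw [this]; ring
      · rw [if_neg he]
        have := (hind e e' (fun hc => he hc.symm)).integral_fun_mul_eq_mul_integral
          (hL2 e).aestronglyMeasurable (hL2 e').aestronglyMeasurable
        rw [this, hmean e, hmean e']
        ring
    simp [term]
  simp [this]

/-- Unbiasedness of the trace estimator. -/
theorem trace_estimator_unbiased
    (Ω : Type) [MeasurableSpace Ω] (μ : Measure Ω) [IsProbabilityMeasure μ]
    (m n : ℕ) (hm : 1 ≤ m) (hn : 1 ≤ n)
    (A : Matrix (Fin m) (Fin m) ℝ) (hA : A.PosDef)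
    (B : ℝ → Matrix (Fin n) (Fin n) ℝ)
    (hB : ∀ t, t ∈ Set.Icc (0:ℝ) 1 → (B t).PosDef)
    (Asqrt : Matrix (Fin m) (Fin m) ℝ)
    (hAsqrt : Asqrt.PosSemidef ∧ Asqrt * Asqrt = A)
    (Bsqrt : ℝ → Matrix (Fin n) (Fin n) ℝ)
    (hBsqrt : ∀ t, t ∈ Set.Icc (0:ℝ) 1 → (Bsqrt t).PosSemidef ∧ Bsqrt t * Bsqrt t = B t)
    (Z1 Z2 : Ω → Matrix (Fin n) (Fin m) ℝ)
    (hmeas1 : ∀ j i, Measurable fun ω => Z1 ω j i)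
    (hmeas2 : ∀ j i, Measurable fun ω => Z2 ω j i)
    (hmean1 : ∀ j i, ∫ ω, Z1 ω j i ∂μ = 0)
    (hmean2 : ∀ j i, ∫ ω, Z2 ω j i ∂μ = 0)
    (hvar1 : ∀ j i, ∫ ω, (Z1 ω j i) ^ 2 ∂μ = 1)
    (hvar2 : ∀ j i, ∫ ω, (Z2 ω j i) ^ 2 ∂μ = 1)
    (hindep : iIndepFun
      (fun p : (Fin n × Fin m) ⊕ (Fin n × Fin m) => fun ω =>
        Sum.elim (fun q => Z1 ω q.1 q.2) (fun q => Z2 ω q.1 q.2) p) μ)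
    (X : Ω → Matrix (Fin n) (Fin m) ℝ)
    (hX : ∀ ω, X ω = Z1 ω * Asqrt +
      Matrix.of fun (j : Fin n) (i : Fin m) =>
        (Bsqrt (((i : ℕ) + 1 : ℝ) / m)).mulVec (fun k => Z2 ω k i) j)
    (τ : ℝ) (htr : ∀ t, t ∈ Set.Icc (0:ℝ) 1 → (B t).trace = τ) :
    ∫ ω, ((∑ i : Fin m, (1 / (m : ℝ)) * ∑ j : Fin n, (X ω j i) ^ 2)
        - (n / m : ℝ) * A.trace) ∂μ = τ := by
  have hm0 : (0:ℝ) < m := by exact_mod_cast Nat.lt_of_lt_of_le Nat.zero_lt_one hm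
  set t : Fin m → ℝ := fun i => ((i : ℕ) + 1 : ℝ) / m with ht_def
  have ht : ∀ i : Fin m, t i ∈ Set.Icc (0:ℝ) 1 := by
    intro i
    constructor
    · positivity
    · rw [div_le_one hm0]
      have : (i : ℕ) + 1 ≤ m := i.2
      exact_mod_cast this
  -- L² membership of the entries
  have hZ1L2 : ∀ j i, MemLp (fun ω => Z1 ω j i) 2 μ := by
    intro j i
    refine (memLp_two_iff_integrable_sq (hmeas1 j i).aestronglyMeasurable).2 ?_
    have hne : ∫ ω, (Z1 ω j i) ^ 2 ∂μ ≠ 0 := by rw [hvar1 j i]; norm_num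
    by_contra hni
    exact hne (integral_undef (by simpa [Pi.pow_apply] using hni))
  have hZ2L2 : ∀ j i, MemLp (fun ω => Z2 ω j i) 2 μ := by
    intro j i
    refine (memLp_two_iff_integrable_sq (hmeas2 j i).aestronglyMeasurable).2 ?_
    have hne : ∫ ω, (Z2 ω j i) ^ 2 ∂μ ≠ 0 := by rw [hvar2 j i]; norm_num
    by_contra hni
    exact hne (integral_undef (by simpa [Pi.pow_apply] using hni))
  -- per-entry structure
  have hXentry : ∀ ω (j : Fin n) (i : Fin m),
      X ω j i = ∑ e : (Fin m) ⊕ (Fin n),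
        (Sum.elim (fun k => Asqrt k i) (fun k => Bsqrt (t i) j k) e) *
        (Sum.elim (fun k ω' => Z1 ω' j k) (fun k ω' => Z2 ω' k i) e ω) := by
    intro ω j i
    rw [hX ω, Fintype.sum_sum_type]
    simp only [Matrix.add_apply, Matrix.mul_apply, Matrix.of_apply, Matrix.mulVec,
      dotProduct, Sum.elim_inl, Sum.elim_inr]
    exact congrArg₂ (· + ·) (Finset.sum_congr rfl fun k _ => mul_comm _ _) rfl
  have hEntrySq : ∀ (j : Fin n) (i : Fin m),
      ∫ ω, (X ω j i) ^ 2 ∂μ = A i i + (B (t i)) j j := by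
    intro j i
    have hL2 : ∀ e : (Fin m) ⊕ (Fin n),
        MemLp (Sum.elim (fun k ω' => Z1 ω' j k) (fun k ω' => Z2 ω' k i) e) 2 μ := by
      rintro (k | k)
      · exact hZ1L2 j k
      · exact hZ2L2 k i
    have hmean : ∀ e : (Fin m) ⊕ (Fin n),
        ∫ ω, (Sum.elim (fun k ω' => Z1 ω' j k) (fun k ω' => Z2 ω' k i) e) ω ∂μ = 0 := by
      rintro (k | k)
      · exact hmean1 j k
      · exact hmean2 k i
    have hvar : ∀ e : (Fin m) ⊕ (Fin n),
        ∫ ω, ((Sum.elim (fun k ω' => Z1 ω' j k) (fun k ω' => Z2 ω' k i) e) ω) ^ 2 ∂μ = 1 := by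
      rintro (k | k)
      · exact hvar1 j k
      · exact hvar2 k i
    have hind : ∀ e e' : (Fin m) ⊕ (Fin n), e ≠ e' →
        IndepFun (Sum.elim (fun k ω' => Z1 ω' j k) (fun k ω' => Z2 ω' k i) e)
          (Sum.elim (fun k ω' => Z1 ω' j k) (fun k ω' => Z2 ω' k i) e') μ := by
      have key : ∀ (p q : (Fin n × Fin m) ⊕ (Fin n × Fin m)), p ≠ q →
          IndepFun (fun ω => Sum.elim (fun q' : Fin n × Fin m => Z1 ω q'.1 q'.2)
              (fun q' => Z2 ω q'.1 q'.2) p)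
            (fun ω => Sum.elim (fun q' : Fin n × Fin m => Z1 ω q'.1 q'.2)
              (fun q' => Z2 ω q'.1 q'.2) q) μ :=
        fun p q hpq => hindep.indepFun hpq
      rintro (k | k) (k' | k') hne
      · exact key (Sum.inl (j, k)) (Sum.inl (j, k'))
          (fun h => hne (by simpa [Prod.ext_iff] using h))
      · exact key (Sum.inl (j, k)) (Sum.inr (k', i)) (by simp)
      · exact key (Sum.inr (k, i)) (Sum.inl (j, k')) (by simp)
      · exact key (Sum.inr (k, i)) (Sum.inr (k', i))
          (fun h => hne (by simpa [Prod.ext_iff] using h))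
    have hsum := helper_sq_sum μ
      (Sum.elim (fun k => Asqrt k i) (fun k => Bsqrt (t i) j k))
      (Sum.elim (fun k ω' => Z1 ω' j k) (fun k ω' => Z2 ω' k i))
      hL2 hmean hvar hind
    have hXeq : ∫ ω, (X ω j i) ^ 2 ∂μ
        = ∫ ω, (∑ e : (Fin m) ⊕ (Fin n),
          (Sum.elim (fun k => Asqrt k i) (fun k => Bsqrt (t i) j k) e) *
          (Sum.elim (fun k ω' => Z1 ω' j k) (fun k ω' => Z2 ω' k i) e ω)) ^ 2 ∂μ := by
      congr 1; funext ω; rw [hXentry ω j i]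
    rw [hXeq, hsum, Fintype.sum_sum_type]
    simp only [Sum.elim_inl, Sum.elim_inr]
    congr 1
    · have hAsym : ∀ k, Asqrt k i = Asqrt i k := by
        intro k
        have h := hAsqrt.1.isHermitian
        calc Asqrt k i = Asqrt.conjTranspose i k := by simp [Matrix.conjTranspose_apply]
        _ = Asqrt i k := by rw [h]
      calc ∑ k, (Asqrt k i) ^ 2 = ∑ k, Asqrt i k * Asqrt k i := by
            refine Finset.sum_congr rfl fun k _ => ?_
            rw [sq, hAsym k]
      _ = (Asqrt * Asqrt) i i := (Matrix.mul_apply).symm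
      _ = A i i := by rw [hAsqrt.2]
    · have hBsd := hBsqrt (t i) (ht i)
      have hBsym : ∀ k, Bsqrt (t i) j k = Bsqrt (t i) k j := by
        intro k
        have h := hBsd.1.isHermitian
        calc Bsqrt (t i) j k = (Bsqrt (t i)).conjTranspose k j := by
              simp [Matrix.conjTranspose_apply]
        _ = Bsqrt (t i) k j := by rw [h]
      calc ∑ k, (Bsqrt (t i) j k) ^ 2 = ∑ k, Bsqrt (t i) j k * Bsqrt (t i) k j := by
            refine Finset.sum_congr rfl fun k _ => ?_
            rw [sq, hBsym k]
      _ = (Bsqrt (t i) * Bsqrt (t i)) j j := (Matrix.mul_apply).symm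
      _ = (B (t i)) j j := by rw [hBsd.2]
  -- integrability
  have hXL2 : ∀ (j : Fin n) (i : Fin m), MemLp (fun ω => X ω j i) 2 μ := by
    intro j i
    have h1 : (fun ω => X ω j i) = fun ω => ∑ e : (Fin m) ⊕ (Fin n),
        (Sum.elim (fun k => Asqrt k i) (fun k => Bsqrt (t i) j k) e) *
        (Sum.elim (fun k ω' => Z1 ω' j k) (fun k ω' => Z2 ω' k i) e ω) :=
      funext fun ω => hXentry ω j i
    rw [h1]
    apply memLp_finsetSum
    rintro (k | k) _
    · exact (hZ1L2 j k).const_mul _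
    · exact (hZ2L2 k i).const_mul _
  have hXsqInt : ∀ (j : Fin n) (i : Fin m), Integrable (fun ω => (X ω j i) ^ 2) μ := by
    intro j i
    have := (memLp_two_iff_integrable_sq (hXL2 j i).aestronglyMeasurable).1 (hXL2 j i)
    simpa [Pi.pow_apply] using this
  -- main computation
  have hInt1 : Integrable (fun ω => ∑ i : Fin m, (1 / (m:ℝ)) * ∑ j : Fin n, (X ω j i) ^ 2) μ := by
    apply integrable_finset_sum
    intro i _
    exact (integrable_finset_sum _ (fun j _ => hXsqInt j i)).const_mul _
  rw [integral_sub hInt1 (integrable_const _), integral_const, probReal_univ,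
    one_smul, integral_finset_sum _ (fun i _ => (integrable_finset_sum _
      (fun j _ => hXsqInt j i)).const_mul _)]
  have hinner : ∀ i : Fin m, ∫ ω, (1 / (m:ℝ)) * ∑ j : Fin n, (X ω j i) ^ 2 ∂μ
      = (1 / (m:ℝ)) * ((n : ℝ) * A i i + τ) := by
    intro i
    rw [integral_const_mul, integral_finset_sum _ (fun j _ => hXsqInt j i)]
    congr 1
    have : ∀ j : Fin n, ∫ ω, (X ω j i) ^ 2 ∂μ = A i i + (B (t i)) j j := fun j => hEntrySq j i
    simp_rw [this]
    rw [Finset.sum_add_distrib, Finset.sum_const, Finset.card_univ, Fintype.card_fin,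
      nsmul_eq_mul]
    congr 1
    have : ∑ j : Fin n, (B (t i)) j j = (B (t i)).trace := by
      simp [Matrix.trace, Matrix.diag]
    rw [this, htr (t i) (ht i)]
  simp_rw [hinner]
  have htrA : A.trace = ∑ i : Fin m, A i i := by simp [Matrix.trace, Matrix.diag]
  rw [htrA, Finset.mul_sum]
  have hmne : (m:ℝ) ≠ 0 := ne_of_gt hm0
  have expand : ∀ x : Fin m, (1 / (m:ℝ)) * ((n:ℝ) * A x x + τ)
      = ((n:ℝ) / m) * A x x + τ / m := by
    intro x; field_simp
  simp_rw [expand]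
  rw [Finset.sum_add_distrib, Finset.sum_const, Finset.card_univ, Fintype.card_fin,
    nsmul_eq_mul, add_sub_cancel_left]
  field_simp
end
end
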